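/- Let (Z, M) be jointly distributed random variables. Among all measurable families of maps {T_m} such that T_M(Z) is independent of M and T_M(Z) has the same marginal distribution as Z, the family minimizing E[(T_M(Z) − Z)²] is given, for each m, by the optimal transport map T_m from the conditional law of Z given M = m to the marginal law of Z under quadratic cost. -/

import Mathlib

open MeasureTheory ProbabilityTheory

/-- The kernel `m ↦ (κ m).map (S m)` for a jointly measurable family `S`. -/
noncomputable def famMap (κ : Kernel ℝ ℝ) [IsSFiniteKernel κ] (S : ℝ → ℝ → ℝ)
    (hS : Measurable (Function.uncurry S)) : Kernel ℝ ℝ where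
  toFun m := (κ m).map (S m)
  measurable' := by
    refine Measure.measurable_of_measurable_coe _ fun s hs => ?_
    have hSm : ∀ m, Measurable (S m) := fun m => hS.comp measurable_prodMk_left
    simp_rw [Measure.map_apply (hSm _) hs]
    have : ∀ m, S m ⁻¹' s = Prod.mk m ⁻¹' (Function.uncurry S ⁻¹' s) := fun m => rfl
    simp_rw [this]
    exact Kernel.measurable_kernel_prodMk_left (hS hs)

lemma famMap_apply (κ : Kernel ℝ ℝ) [IsSFiniteKernel κ] (S : ℝ → ℝ → ℝ)
    (hS : Measurable (Function.uncurry S)) (m : ℝ) :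
    famMap κ S hS m = (κ m).map (S m) := rfl

instance famMap_markov (κ : Kernel ℝ ℝ) [IsMarkovKernel κ] (S : ℝ → ℝ → ℝ)
    (hS : Measurable (Function.uncurry S)) : IsMarkovKernel (famMap κ S hS) :=
  ⟨fun m => by
    rw [famMap_apply]
    exact Measure.isProbabilityMeasure_map (hS.comp measurable_prodMk_left).aemeasurable⟩

theorem stmt_0 {α : Type*} [MeasureSpace α] [IsProbabilityMeasure (ℙ : Measure α)]
    (Z M : α → ℝ) (hZ : Measurable Z) (hM : Measurable M)
    (T : ℝ → ℝ → ℝ) (hT : Measurable (Function.uncurry T))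
    (hTpush : ∀ᵐ m ∂(Measure.map M ℙ),
      (condDistrib Z M ℙ m).map (T m) = Measure.map Z ℙ)
    (hTopt : ∀ᵐ m ∂(Measure.map M ℙ), ∀ g : ℝ → ℝ, Measurable g →
      (condDistrib Z M ℙ m).map g = Measure.map Z ℙ →
      ∫⁻ z, ENNReal.ofReal ((T m z - z) ^ 2) ∂(condDistrib Z M ℙ m)
        ≤ ∫⁻ z, ENNReal.ofReal ((g z - z) ^ 2) ∂(condDistrib Z M ℙ m)) :
    Measure.map (fun ω => T (M ω) (Z ω)) ℙ = Measure.map Z ℙ ∧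
    IndepFun (fun ω => T (M ω) (Z ω)) M ℙ ∧
    (∀ S : ℝ → ℝ → ℝ, Measurable (Function.uncurry S) →
      Measure.map (fun ω => S (M ω) (Z ω)) ℙ = Measure.map Z ℙ →
      IndepFun (fun ω => S (M ω) (Z ω)) M ℙ →
      ∫⁻ ω, ENNReal.ofReal ((T (M ω) (Z ω) - Z ω) ^ 2) ∂ℙ
        ≤ ∫⁻ ω, ENNReal.ofReal ((S (M ω) (Z ω) - Z ω) ^ 2) ∂ℙ) := by
  have hpair : Measurable fun ω => (M ω, Z ω) := hM.prodMk hZ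
  set μM := Measure.map M ℙ with hμM
  set ν := Measure.map Z ℙ with hν
  set κ := condDistrib Z M ℙ with hκdef
  have hμMP : IsProbabilityMeasure μM := Measure.isProbabilityMeasure_map hM.aemeasurable
  have hνP : IsProbabilityMeasure ν := Measure.isProbabilityMeasure_map hZ.aemeasurable
  -- disintegration
  have hA : Measure.map (fun ω => (M ω, Z ω)) ℙ = μM ⊗ₘ κ := by
    rw [hκdef, condDistrib, hμM, ← Measure.fst_map_prodMk (X := M) hZ]
    exact (Measure.disintegrate _ _).symm
  -- joint law of (M, S_M(Z)) via famMap
  have hB : ∀ (S : ℝ → ℝ → ℝ) (hS : Measurable (Function.uncurry S)),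
      Measure.map (fun ω => (M ω, S (M ω) (Z ω))) ℙ = μM ⊗ₘ famMap κ S hS := by
    intro S hS
    have hg : Measurable fun p : ℝ × ℝ => (p.1, S p.1 p.2) :=
      measurable_fst.prodMk hS
    have : (fun ω => (M ω, S (M ω) (Z ω)))
        = (fun p : ℝ × ℝ => (p.1, S p.1 p.2)) ∘ (fun ω => (M ω, Z ω)) := rfl
    rw [this, ← Measure.map_map hg hpair, hA]
    ext s hs
    rw [Measure.map_apply hg hs, Measure.compProd_apply (hg hs),
      Measure.compProd_apply hs]
    refine lintegral_congr fun m => ?_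
    rw [famMap_apply, Measure.map_apply (show Measurable (S m) from
      hS.comp measurable_prodMk_left) (measurable_prodMk_left hs)]
    rfl
  -- the family T pushes to the product measure
  have hTjoint : Measure.map (fun ω => (M ω, T (M ω) (Z ω))) ℙ = μM.prod ν := by
    rw [hB T hT, ← Measure.compProd_const]
    refine Measure.compProd_congr ?_
    filter_upwards [hTpush] with m hm
    rw [famMap_apply, Kernel.const_apply]
    exact hm
  -- marginal of T_M(Z)
  have hTmarg : Measure.map (fun ω => T (M ω) (Z ω)) ℙ = ν := by
    have hTm : Measurable fun ω => T (M ω) (Z ω) := hT.comp hpair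
    have := congrArg Measure.snd hTjoint
    rwa [Measure.snd_map_prodMk hM, Measure.snd_prod] at this
  have hTm : Measurable fun ω => T (M ω) (Z ω) := hT.comp hpair
  -- independence
  have hTind : IndepFun (fun ω => T (M ω) (Z ω)) M ℙ := by
    refine IndepFun.symm ?_
    rw [indepFun_iff_map_prod_eq_prod_map_map hM.aemeasurable hTm.aemeasurable]
    rw [hTjoint, hTmarg]
  refine ⟨hTmarg, hTind, ?_⟩
  -- optimality
  intro S hS hSmarg hSind
  have hSm : Measurable fun ω => S (M ω) (Z ω) := hS.comp hpair
  -- a.e. pushforward property for S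
  have hSpush : ∀ᵐ m ∂μM, (κ m).map (S m) = ν := by
    have hSjoint : Measure.map (fun ω => (M ω, S (M ω) (Z ω))) ℙ = μM.prod ν := by
      rw [← hSmarg]
      exact (indepFun_iff_map_prod_eq_prod_map_map hM.aemeasurable
        hSm.aemeasurable).mp hSind.symm
    set ρ : Measure (ℝ × ℝ) := μM.prod ν with hρ
    have hρfst : ρ.fst = μM := Measure.fst_prod
    have h1 : ρ = ρ.fst ⊗ₘ famMap κ S hS := by
      rw [hρfst, ← hB S hS, hSjoint]
    have h2 : ρ = ρ.fst ⊗ₘ Kernel.const ℝ ν := by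
      rw [hρfst, Measure.compProd_const]
    have e1 := eq_condKernel_of_measure_eq_compProd (famMap κ S hS) h1
    have e2 := eq_condKernel_of_measure_eq_compProd (Kernel.const ℝ ν) h2
    rw [hρfst] at e1 e2
    filter_upwards [e1, e2] with m h1m h2m
    rw [famMap_apply] at h1m
    rw [h1m, h2m.symm, Kernel.const_apply]
  -- rewrite both integrals as iterated integrals
  have key : ∀ (W : ℝ → ℝ → ℝ), Measurable (Function.uncurry W) →
      ∫⁻ ω, ENNReal.ofReal ((W (M ω) (Z ω) - Z ω) ^ 2) ∂ℙ
        = ∫⁻ m, ∫⁻ z, ENNReal.ofReal ((W m z - z) ^ 2) ∂(κ m) ∂μM := by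
    intro W hW
    have hf : Measurable fun p : ℝ × ℝ => ENNReal.ofReal ((W p.1 p.2 - p.2) ^ 2) := by
      exact ENNReal.measurable_ofReal.comp (((hW.sub measurable_snd).pow_const 2))
    calc ∫⁻ ω, ENNReal.ofReal ((W (M ω) (Z ω) - Z ω) ^ 2) ∂ℙ
        = ∫⁻ p, ENNReal.ofReal ((W p.1 p.2 - p.2) ^ 2)
            ∂(Measure.map (fun ω => (M ω, Z ω)) ℙ) := (lintegral_map hf hpair).symm
      _ = ∫⁻ p, ENNReal.ofReal ((W p.1 p.2 - p.2) ^ 2) ∂(μM ⊗ₘ κ) := by rw [hA]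
      _ = ∫⁻ m, ∫⁻ z, ENNReal.ofReal ((W m z - z) ^ 2) ∂(κ m) ∂μM :=
        Measure.lintegral_compProd hf
  rw [key T hT, key S hS]
  refine lintegral_mono_ae ?_
  filter_upwards [hTopt, hSpush] with m hopt hp
  exact hopt (S m) (hS.comp measurable_prodMk_left) hp
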